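/- arXiv:1509.04482 — 2 statements merged into one kernel-verified Lean document; each statement's English description precedes it below -/
import Mathlib

section
/- Let d ≥ 1 be an integer, let a, b > 0 and C ≥ 1 be reals, and set p = 1 + a/(a + 2b). Let T and, for each real Λ ≥ 1, T¹_Λ and T²_Λ be maps sending indicator functions of finite subsets of ℤ^d to nonnegative functions on ℤ^d. Assume that for every finite F ⊆ ℤ^d and every Λ ≥ 1: (i) T1_F(x) ≤ T¹_Λ 1_F(x) + T²_Λ 1_F(x) for every x ∈ ℤ^d; (ii) #{x ∈ ℤ^d : T¹_Λ 1_F(x) > λ} ≤ C Λ^{a} λ^{−1} #F for every λ > 0; and (iii) Σ_{x ∈ ℤ^d} (T²_Λ 1_F(x))² ≤ C Λ^{−2b} #F. Then there is a constant C' depending only on a, b, C such that #{x ∈ ℤ^d : T1_F(x) > λ} ≤ C' λ^{−p} #F for every finite F ⊆ ℤ^d and every 0 < λ ≤ 1. -/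
open MeasureTheory Set Complex
open scoped Real BigOperators

noncomputable section

def eChar (x : ℝ) : ℂ := Complex.exp (2 * (Real.pi : ℂ) * Complex.I * (x : ℂ))

def kSphere (k d : ℕ) (r : ℝ) : Set (Fin d → ℤ) :=
  {n | ∑ i, |((n i : ℝ))| ^ k = r ^ k}

def radiiSet (k d : ℕ) : Set ℝ := {r | 0 < r ∧ (kSphere k d r).Nonempty}

def latticeCount (k d : ℕ) (r : ℝ) : ℕ := (kSphere k d r).ncard

def sphAvg (k d : ℕ) (r : ℝ) (f : (Fin d → ℤ) → ℂ) (x : Fin d → ℤ) : ℂ :=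
  (latticeCount k d r : ℂ)⁻¹ * ∑' y : kSphere k d r, f (x - (y : Fin d → ℤ))

def maxFn (k d : ℕ) (R : Set ℝ) (f : (Fin d → ℤ) → ℂ) (x : Fin d → ℤ) : ℝ :=
  ⨆ r ∈ R, ‖sphAvg k d r f x‖

def Regular (k d : ℕ) : Prop :=
  ∃ c₁ c₂ r₀ : ℝ, 0 < c₁ ∧ c₁ ≤ c₂ ∧ 1 ≤ r₀ ∧
    ∀ r ∈ radiiSet k d, r₀ ≤ r →
      c₁ * r ^ ((d : ℝ) - (k : ℝ)) ≤ (latticeCount k d r : ℝ) ∧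
      (latticeCount k d r : ℝ) ≤ c₂ * r ^ ((d : ℝ) - (k : ℝ))

def indicatorFn (d : ℕ) (F : Finset (Fin d → ℤ)) : (Fin d → ℤ) → ℂ :=
  fun y => if y ∈ F then 1 else 0

def RestrictedWeakType (k d : ℕ) (R : Set ℝ) (p : ℝ) : Prop :=
  ∃ C : ℝ, 0 < C ∧ ∀ F : Finset (Fin d → ℤ), ∀ lam : ℝ, 0 < lam →
    {x : Fin d → ℤ | lam < maxFn k d R (indicatorFn d F) x}.encard ≤
      ENNReal.ofReal (C * lam ^ (-p) * (F.card : ℝ))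

def HypH (k : ℕ) (γ : ℝ) : Prop :=
  ∃ C : ℝ, 0 < C ∧ ∀ N : ℕ, ∀ t ξ : ℝ, ∀ a q : ℤ,
    1 ≤ a → a < q → (q : ℝ) ≤ (N : ℝ) → IsCoprime a q →
    |t - (a : ℝ) / (q : ℝ)| ≤ ((q : ℝ) ^ 2)⁻¹ →
    ‖∑ n ∈ Finset.Icc 1 N, eChar (t * (n : ℝ) ^ k + ξ * (n : ℝ))‖ ≤
      C * (N : ℝ) * (((q : ℝ))⁻¹ + ((N : ℝ))⁻¹ + (q : ℝ) * (N : ℝ) ^ (-(k : ℝ))) ^ γ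

def DensityLE (R : Set ℝ) (δ : ℝ) : Prop :=
  ∃ C : ℝ, 0 < C ∧ ∀ Λ : ℝ, 1 ≤ Λ →
    {r ∈ R | r ≤ Λ}.encard ≤ ENNReal.ofReal (C * Λ ^ δ)

def HypMVH (k s : ℕ) : Prop :=
  ∃ C : ℝ, 0 < C ∧ ∀ r : ℝ, 1 ≤ r →
    ((((Fintype.piFinset fun _ : Fin s => Finset.Icc (1 : ℤ) ⌊r⌋) ×ˢ
       (Fintype.piFinset fun _ : Fin s => Finset.Icc (1 : ℤ) ⌊r⌋)).filter
        (fun p => ∑ i, (p.1 i) ^ k = ∑ i, (p.2 i) ^ k)).card : ℝ) ≤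
      C * r ^ (2 * (s : ℝ) - (k : ℝ))

def alphaSum (k : ℕ) (r t ξ : ℝ) : ℂ :=
  ∑ n ∈ Finset.Icc (-⌊r⌋) ⌊r⌋, eChar (|((n : ℝ))| ^ k * t + (n : ℝ) * ξ)

def Jmean (s k N : ℕ) : ℕ :=
  (((Fintype.piFinset fun _ : Fin s => Finset.Icc (1 : ℤ) (N : ℤ)) ×ˢ
    (Fintype.piFinset fun _ : Fin s => Finset.Icc (1 : ℤ) (N : ℤ))).filter
      (fun p => ∀ l ∈ Finset.Icc 1 k, ∑ i, (p.1 i) ^ l = ∑ i, (p.2 i) ^ l)).card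

open scoped ENNReal

lemma cheb_aux {ι : Type*} (f : ι → ℝ) (c : ℝ) (hc : 0 < c) :
    (({x | c < f x}.encard : ℝ≥0∞)) * ENNReal.ofReal (c ^ 2) ≤
      ∑' x, ENNReal.ofReal (f x ^ 2) := by
  rw [← ENNReal.tsum_set_const]
  calc ∑' _ : {x | c < f x}, ENNReal.ofReal (c ^ 2)
      ≤ ∑' x : {x | c < f x}, ENNReal.ofReal (f (x : ι) ^ 2) := by
        refine ENNReal.tsum_le_tsum fun x => ENNReal.ofReal_le_ofReal ?_
        exact pow_le_pow_left₀ hc.le (le_of_lt x.2) 2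
    _ ≤ ∑' x, ENNReal.ofReal (f x ^ 2) :=
        ENNReal.tsum_comp_le_tsum_of_injective Subtype.val_injective _

/-- Abstract Bourgain–Ionescu balancing argument. -/
theorem bourgain_ionescu_balancing (d : ℕ) (hd : 1 ≤ d) (a b C : ℝ)
    (ha : 0 < a) (hb : 0 < b) (hC : 1 ≤ C)
    (T : Finset (Fin d → ℤ) → (Fin d → ℤ) → ℝ)
    (T1 T2 : ℝ → Finset (Fin d → ℤ) → (Fin d → ℤ) → ℝ)
    (hTnn : ∀ F x, 0 ≤ T F x)
    (hT1nn : ∀ Λ F x, 0 ≤ T1 Λ F x)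
    (hT2nn : ∀ Λ F x, 0 ≤ T2 Λ F x)
    (hsplit : ∀ F : Finset (Fin d → ℤ), ∀ Λ : ℝ, 1 ≤ Λ → ∀ x : Fin d → ℤ,
      T F x ≤ T1 Λ F x + T2 Λ F x)
    (hweak1 : ∀ F : Finset (Fin d → ℤ), ∀ Λ : ℝ, 1 ≤ Λ → ∀ lam : ℝ, 0 < lam →
      {x : Fin d → ℤ | lam < T1 Λ F x}.encard ≤
        ENNReal.ofReal (C * Λ ^ a * lam⁻¹ * (F.card : ℝ)))
    (hl2 : ∀ F : Finset (Fin d → ℤ), ∀ Λ : ℝ, 1 ≤ Λ →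
      (∑' x : Fin d → ℤ, ENNReal.ofReal (T2 Λ F x ^ 2)) ≤
        ENNReal.ofReal (C * Λ ^ (-(2 * b)) * (F.card : ℝ))) :
    ∃ C' : ℝ, 0 < C' ∧ ∀ F : Finset (Fin d → ℤ), ∀ lam : ℝ, 0 < lam → lam ≤ 1 →
      {x : Fin d → ℤ | lam < T F x}.encard ≤
        ENNReal.ofReal (C' * lam ^ (-(1 + a / (a + 2 * b))) * (F.card : ℝ)) := by
  refine ⟨6 * C, by linarith, fun F lam hlam hlam1 => ?_⟩
  have hq : (0 : ℝ) < a + 2 * b := by linarith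
  set Λ : ℝ := lam ^ (-(a + 2 * b)⁻¹) with hΛdef
  have hΛ : 1 ≤ Λ := Real.one_le_rpow_of_pos_of_le_one_of_nonpos hlam hlam1
    (by simp [inv_nonneg, hq.le])
  have hhalf : (0 : ℝ) < lam / 2 := by linarith
  -- exponent computations
  have hΛa : Λ ^ a = lam ^ (-(a / (a + 2 * b))) := by
    rw [hΛdef, ← Real.rpow_mul hlam.le]; congr 1; field_simp
  have hΛb : Λ ^ (-(2 * b)) = lam ^ (2 * b / (a + 2 * b)) := by
    rw [hΛdef, ← Real.rpow_mul hlam.le]; congr 1; field_simp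
  have key1 : lam ^ (-(a / (a + 2 * b))) * lam⁻¹ = lam ^ (-(1 + a / (a + 2 * b))) := by
    rw [← Real.rpow_neg_one lam, ← Real.rpow_add hlam]; congr 1; ring
  have key2 : lam ^ (2 * b / (a + 2 * b)) / (lam / 2) ^ 2 =
      4 * lam ^ (-(1 + a / (a + 2 * b))) := by
    have : (lam / 2) ^ 2 = lam ^ (2 : ℝ) / 4 := by
      rw [Real.rpow_two]; ring
    rw [this, div_div_eq_mul_div, mul_comm, mul_div_assoc, ← Real.rpow_sub hlam]
    congr 1
    field_simp
    ring
  -- set decomposition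
  set S1 := {x : Fin d → ℤ | lam / 2 < T1 Λ F x}
  set S2 := {x : Fin d → ℤ | lam / 2 < T2 Λ F x}
  have hsub : {x : Fin d → ℤ | lam < T F x} ⊆ S1 ∪ S2 := by
    intro x hx
    by_contra hcon
    simp only [S1, S2, mem_union, mem_setOf_eq, not_or, not_lt] at hcon
    have := hsplit F Λ hΛ x
    simp only [mem_setOf_eq] at hx
    rcases hcon with ⟨h1, h2⟩
    linarith
  have hstep : ({x : Fin d → ℤ | lam < T F x}.encard : ℝ≥0∞) ≤
      (S1.encard : ℝ≥0∞) + (S2.encard : ℝ≥0∞) := by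
    calc ({x : Fin d → ℤ | lam < T F x}.encard : ℝ≥0∞)
        ≤ ((S1 ∪ S2).encard : ℝ≥0∞) := by
          exact_mod_cast encard_mono hsub
      _ ≤ _ := by exact_mod_cast encard_union_le S1 S2
  -- bound S1
  have hB1 : (S1.encard : ℝ≥0∞) ≤
      ENNReal.ofReal (2 * C * lam ^ (-(1 + a / (a + 2 * b))) * (F.card : ℝ)) := by
    have := hweak1 F Λ hΛ (lam / 2) hhalf
    have heq : C * Λ ^ a * (lam / 2)⁻¹ * (F.card : ℝ) =
        2 * C * lam ^ (-(1 + a / (a + 2 * b))) * (F.card : ℝ) := by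
      rw [hΛa]
      rw [show (lam / 2)⁻¹ = 2 * lam⁻¹ by field_simp]
      rw [show C * lam ^ (-(a / (a + 2 * b))) * (2 * lam⁻¹) =
        2 * C * (lam ^ (-(a / (a + 2 * b))) * lam⁻¹) by ring, key1]
    rwa [heq] at this
  -- bound S2 via Chebyshev
  have hB2 : (S2.encard : ℝ≥0∞) ≤
      ENNReal.ofReal (4 * C * lam ^ (-(1 + a / (a + 2 * b))) * (F.card : ℝ)) := by
    have hch := (cheb_aux (T2 Λ F) (lam / 2) hhalf).trans (hl2 F Λ hΛ)
    have hc2 : (0 : ℝ) < (lam / 2) ^ 2 := by positivity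
    have hne : ENNReal.ofReal ((lam / 2) ^ 2) ≠ 0 := by
      simp [ENNReal.ofReal_eq_zero, not_le, hc2, hlam.ne']
    have := (ENNReal.le_div_iff_mul_le (Or.inl hne) (Or.inl ENNReal.ofReal_ne_top)).mpr hch
    rw [← ENNReal.ofReal_div_of_pos hc2] at this
    refine this.trans (ENNReal.ofReal_le_ofReal (le_of_eq ?_))
    rw [hΛb]
    rw [show C * lam ^ (2 * b / (a + 2 * b)) * (F.card : ℝ) / (lam / 2) ^ 2 =
      C * (F.card : ℝ) * (lam ^ (2 * b / (a + 2 * b)) / (lam / 2) ^ 2) by ring, key2]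
    ring
  calc ({x : Fin d → ℤ | lam < T F x}.encard : ℝ≥0∞)
      ≤ (S1.encard : ℝ≥0∞) + (S2.encard : ℝ≥0∞) := hstep
    _ ≤ ENNReal.ofReal (2 * C * lam ^ (-(1 + a / (a + 2 * b))) * (F.card : ℝ)) +
        ENNReal.ofReal (4 * C * lam ^ (-(1 + a / (a + 2 * b))) * (F.card : ℝ)) :=
        add_le_add hB1 hB2
    _ ≤ ENNReal.ofReal (6 * C * lam ^ (-(1 + a / (a + 2 * b))) * (F.card : ℝ)) := by
        rw [← ENNReal.ofReal_add (by positivity) (by positivity)]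
        exact ENNReal.ofReal_le_ofReal (by ring_nf; rfl)

end
end

section
/- For all integers s ≥ 1 and k ≥ 2 there is a constant C = C(s, k) such that for every real r ≥ 1, ∫_0^1 |α_r(t, 0)|^{2s} dt ≤ C r^{k(k−1)/2} J_{s,k}(⌊r⌋ + 1). -/
open MeasureTheory Set Complex
open scoped Real BigOperators

noncomputable section

lemma nat_amgm (a b : ℕ) : 2*(a*b) ≤ a*a + b*b := by
  zify; nlinarith [sq_nonneg ((a:ℤ)-b)]

lemma fiber_count {γ β : Type*} [DecidableEq γ] [DecidableEq β] [AddCommGroup β]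
    (T : Finset γ) (v : γ → β) (wv : β) :
    ((T ×ˢ T).filter fun p => v p.1 - v p.2 = wv).card =
      ∑ a ∈ T.image v, (T.filter fun c => v c = a).card * (T.filter fun c => v c = a - wv).card := by
  classical
  rw [Finset.card_eq_sum_card_fiberwise (f := fun p => v p.1) (t := T.image v)
    (fun p hp => Finset.mem_image_of_mem _ (Finset.mem_product.mp (Finset.mem_filter.mp hp).1).1)]
  refine Finset.sum_congr rfl fun a _ => ?_
  rw [Finset.filter_filter]
  have hpred : ∀ p ∈ T ×ˢ T, ((v p.1 - v p.2 = wv) ∧ v p.1 = a) ↔ (v p.1 = a ∧ v p.2 = a - wv) := by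
    rintro p -
    constructor
    · rintro ⟨h1, h2⟩; exact ⟨h2, by rw [← h1, ← h2]; abel⟩
    · rintro ⟨h1, h2⟩; exact ⟨by rw [h1, h2]; abel, h1⟩
  rw [Finset.filter_congr hpred,
    show (Finset.filter (fun x => v x.1 = a ∧ v x.2 = a - wv) (T ×ˢ T)) =
      (T.filter fun c => v c = a) ×ˢ (T.filter fun c => v c = a - wv) from
      Finset.filter_product (fun c => v c = a) (fun c => v c = a - wv), Finset.card_product]

lemma sum_mul_shift_le {β : Type*} [DecidableEq β] [AddCommGroup β]
    (A : Finset β) (f : β → ℕ) (wv : β) (hvanish : ∀ b, b ∉ A → f b = 0) :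
    ∑ a ∈ A, f a * f (a - wv) ≤ ∑ a ∈ A, f a * f a := by
  have key : 2 * ∑ a ∈ A, f a * f (a - wv) ≤ 2 * ∑ a ∈ A, f a * f a := by
    calc 2 * ∑ a ∈ A, f a * f (a - wv) = ∑ a ∈ A, 2 * (f a * f (a - wv)) := Finset.mul_sum _ _ _
      _ ≤ ∑ a ∈ A, (f a * f a + f (a - wv) * f (a - wv)) :=
          Finset.sum_le_sum fun a _ => nat_amgm _ _
      _ = ∑ a ∈ A, f a * f a + ∑ a ∈ A, f (a - wv) * f (a - wv) := Finset.sum_add_distrib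
      _ ≤ ∑ a ∈ A, f a * f a + ∑ a ∈ A, f a * f a := by
          have h1 : ∑ b ∈ A.image (· - wv), f b * f b = ∑ a ∈ A, f (a - wv) * f (a - wv) :=
            Finset.sum_image (fun a _ b _ h => sub_left_inj.mp h)
          have h2 : ∑ b ∈ A.image (· - wv), f b * f b ≤ ∑ b ∈ A, f b * f b := by
            have h3 : ∑ b ∈ (A.image (· - wv)) ∩ A, f b * f b = ∑ b ∈ A.image (· - wv), f b * f b := by
              apply Finset.sum_subset (Finset.inter_subset_left)
              intro b hb hnb
              have hbA : b ∉ A := fun hbA => hnb (Finset.mem_inter.mpr ⟨hb, hbA⟩)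
              rw [hvanish b hbA, Nat.zero_mul]
            rw [← h3]
            exact Finset.sum_le_sum_of_subset (Finset.inter_subset_right)
          omega
      _ = 2 * ∑ a ∈ A, f a * f a := (two_mul _).symm
  omega

lemma shifted_le_diag {γ β : Type*} [DecidableEq γ] [DecidableEq β] [AddCommGroup β]
    (T : Finset γ) (v : γ → β) (wv : β) :
    ((T ×ˢ T).filter fun p => v p.1 - v p.2 = wv).card ≤
      ((T ×ˢ T).filter fun p => v p.1 - v p.2 = 0).card := by
  classical
  rw [fiber_count, fiber_count]
  simp only [sub_zero]
  refine sum_mul_shift_le _ (fun a => (T.filter fun c => v c = a).card) wv ?_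
  intro b hb
  simp only [Finset.card_eq_zero, Finset.filter_eq_empty_iff]
  intro c hc hvc
  exact hb (hvc ▸ Finset.mem_image_of_mem v hc)

lemma binom_key (s k : ℕ) (c d : Fin s → ℤ) :
    (∑ i, (c i - 1)^k) - (∑ i, (d i - 1)^k) =
      ∑ j : Fin k, ((-1:ℤ))^((j:ℕ)+1+k) * (k.choose ((j:ℕ)+1)) *
        ((∑ i, (c i) ^ ((j:ℕ)+1)) - ∑ i, (d i) ^ ((j:ℕ)+1)) := by
  have expand : ∀ e : Fin s → ℤ, (∑ i, (e i - 1)^k)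
      = ∑ m ∈ Finset.range (k+1), ((-1:ℤ))^(m+k) * (k.choose m) * (∑ i, e i ^ m) := by
    intro e
    calc ∑ i, (e i - 1)^k
        = ∑ i, ∑ m ∈ Finset.range (k+1), (-1:ℤ)^(m+k) * (e i)^m * (k.choose m) := by
          refine Finset.sum_congr rfl fun i _ => ?_
          rw [sub_pow]
          exact Finset.sum_congr rfl fun m _ => by rw [one_pow]; ring
      _ = ∑ m ∈ Finset.range (k+1), ∑ i, (-1:ℤ)^(m+k) * (e i)^m * (k.choose m) :=
          Finset.sum_comm
      _ = ∑ m ∈ Finset.range (k+1), (-1:ℤ)^(m+k) * (k.choose m) * (∑ i, e i ^ m) := by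
          refine Finset.sum_congr rfl fun m _ => ?_
          rw [Finset.mul_sum]
          exact Finset.sum_congr rfl fun i _ => by ring
  rw [expand, expand, ← Finset.sum_sub_distrib]
  have : ∀ m ∈ Finset.range (k+1),
      (-1:ℤ)^(m+k) * (k.choose m) * (∑ i, c i ^ m) - (-1:ℤ)^(m+k) * (k.choose m) * (∑ i, d i ^ m)
      = (-1:ℤ)^(m+k) * (k.choose m) * ((∑ i, c i ^ m) - ∑ i, d i ^ m) := by
    intro m _; ring
  rw [Finset.sum_congr rfl this, Finset.sum_range_succ']
  have h0 : (-1:ℤ)^(0+k) * (k.choose 0) * ((∑ i, c i ^ 0) - ∑ i, d i ^ 0) = 0 := by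
    simp
  rw [h0, add_zero, ← Fin.sum_univ_eq_sum_range]

lemma sum_pow_bounds {s : ℕ} {M : ℤ} (m : ℕ) (c : Fin s → ℤ)
    (hc : ∀ i, c i ∈ Finset.Icc (1:ℤ) M) :
    0 ≤ ∑ i, c i ^ m ∧ ∑ i, c i ^ m ≤ (s : ℤ) * M ^ m := by
  constructor
  · exact Finset.sum_nonneg fun i _ => pow_nonneg (by have := (Finset.mem_Icc.mp (hc i)).1; omega) m
  · calc ∑ i, c i ^ m ≤ ∑ _i : Fin s, M ^ m := by
          refine Finset.sum_le_sum fun i _ => ?_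
          have h := Finset.mem_Icc.mp (hc i)
          exact pow_le_pow_left₀ (by omega) h.2 m
      _ = (s : ℤ) * M ^ m := by simp [mul_comm]

lemma single_le_fibers (s k : ℕ) (hk : 2 ≤ k) (M : ℤ) :
    (((Fintype.piFinset fun _ : Fin s => Finset.Icc (1:ℤ) M) ×ˢ
       (Fintype.piFinset fun _ : Fin s => Finset.Icc (1:ℤ) M)).filter
        (fun p => ∑ i, (p.1 i - 1)^k = ∑ i, (p.2 i - 1)^k)).card ≤
      (Fintype.piFinset fun j : Fin (k-1) =>
        Finset.Icc (-((s : ℤ) * M^((j:ℕ)+1))) ((s : ℤ) * M^((j:ℕ)+1))).card *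
      (((Fintype.piFinset fun _ : Fin s => Finset.Icc (1:ℤ) M) ×ˢ
         (Fintype.piFinset fun _ : Fin s => Finset.Icc (1:ℤ) M)).filter
          (fun p => (fun j : Fin k => (∑ i, p.1 i ^ ((j:ℕ)+1)) - ∑ i, p.2 i ^ ((j:ℕ)+1)) =
            (0 : Fin k → ℤ))).card := by
  classical
  set T := Fintype.piFinset fun _ : Fin s => Finset.Icc (1:ℤ) M with hT
  set v : (Fin s → ℤ) → (Fin k → ℤ) := fun c j => ∑ i, c i ^ ((j:ℕ)+1) with hv
  set P := T ×ˢ T with hP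
  set Q : (Fin s → ℤ) × (Fin s → ℤ) → Prop := fun p => ∑ i, (p.1 i - 1)^k = ∑ i, (p.2 i - 1)^k
    with hQ
  have hdiag : ∀ p : (Fin s → ℤ) × (Fin s → ℤ),
      ((fun j : Fin k => (∑ i, p.1 i ^ ((j:ℕ)+1)) - ∑ i, p.2 i ^ ((j:ℕ)+1)) = (0 : Fin k → ℤ))
        ↔ v p.1 - v p.2 = 0 := by
    intro p
    constructor <;> intro h <;> funext j <;> have := congrFun h j <;> simpa [hv] using this
  set img := (P.filter Q).image (fun p => v p.1 - v p.2) with himg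
  have step1 : (P.filter Q).card ≤ img.card * ((P.filter fun p => v p.1 - v p.2 = 0).card) := by
    rw [Finset.card_eq_sum_card_fiberwise
      (f := fun p => v p.1 - v p.2) (t := img)
      (fun p hp => Finset.mem_image_of_mem _ hp)]
    calc ∑ w ∈ img, ((P.filter Q).filter fun p => v p.1 - v p.2 = w).card
        ≤ ∑ w ∈ img, ((P.filter fun p => v p.1 - v p.2 = w).card) := by
          refine Finset.sum_le_sum fun w _ => Finset.card_le_card ?_
          intro p hp
          simp only [Finset.mem_filter] at hp ⊢
          exact ⟨hp.1.1, hp.2⟩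
      _ ≤ ∑ _w ∈ img, ((P.filter fun p => v p.1 - v p.2 = 0).card) :=
          Finset.sum_le_sum fun w _ => shifted_le_diag T v w
      _ = img.card * _ := by rw [Finset.sum_const, smul_eq_mul]
  have coefkey : ∀ p, Q p →
      ∑ j : Fin k, ((-1:ℤ))^((j:ℕ)+1+k) * (k.choose ((j:ℕ)+1)) * (v p.1 - v p.2) j = 0 := by
    intro p hQp
    have hb := binom_key s k p.1 p.2
    rw [hQp] at hb
    simp only [sub_self] at hb
    rw [show ∑ j : Fin k, ((-1:ℤ))^((j:ℕ)+1+k) * (k.choose ((j:ℕ)+1)) * (v p.1 - v p.2) j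
        = ∑ j : Fin k, ((-1:ℤ))^((j:ℕ)+1+k) * (k.choose ((j:ℕ)+1)) *
          ((∑ i, (p.1 i) ^ ((j:ℕ)+1)) - ∑ i, (p.2 i) ^ ((j:ℕ)+1)) from
      Finset.sum_congr rfl fun j _ => by simp [hv]]
    exact hb.symm
  have step2 : img.card ≤ (Fintype.piFinset fun j : Fin (k-1) =>
      Finset.Icc (-((s : ℤ) * M^((j:ℕ)+1))) ((s : ℤ) * M^((j:ℕ)+1))).card := by
    refine Finset.card_le_card_of_injOn
      (fun w => fun j : Fin (k-1) => w (Fin.castLE (Nat.sub_le k 1) j)) ?_ ?_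
    · intro w hw
      rw [himg] at hw
      obtain ⟨p, hp, rfl⟩ := Finset.mem_image.mp hw
      have hpP := (Finset.mem_filter.mp hp).1
      have hp1 := (Finset.mem_product.mp hpP).1
      have hp2 := (Finset.mem_product.mp hpP).2
      rw [Finset.mem_coe, Fintype.mem_piFinset]
      intro j
      have hc : ∀ i, p.1 i ∈ Finset.Icc (1:ℤ) M := fun i => by
        have := Fintype.mem_piFinset.mp hp1 i; exact this
      have hd : ∀ i, p.2 i ∈ Finset.Icc (1:ℤ) M := fun i => by
        have := Fintype.mem_piFinset.mp hp2 i; exact this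
      have hb1 := sum_pow_bounds ((j:ℕ)+1) p.1 hc
      have hb2 := sum_pow_bounds ((j:ℕ)+1) p.2 hd
      have hval : (v p.1 - v p.2) (Fin.castLE (Nat.sub_le k 1) j)
          = (∑ i, p.1 i ^ ((j:ℕ)+1)) - ∑ i, p.2 i ^ ((j:ℕ)+1) := by
        simp [hv, Fin.coe_castLE]
      simp only [Finset.mem_Icc, hval]
      omega
    · intro w hw w' hw' heq
      rw [himg] at hw hw'
      obtain ⟨p, hp, rfl⟩ := Finset.mem_image.mp hw
      obtain ⟨p', hp', rfl⟩ := Finset.mem_image.mp hw'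
      have hQp := (Finset.mem_filter.mp hp).2
      have hQp' := (Finset.mem_filter.mp hp').2
      set w := v p.1 - v p.2
      set w' := v p'.1 - v p'.2
      have hrest : ∀ j : Fin k, (j:ℕ) < k - 1 → w j = w' j := by
        intro j hj
        have := congrFun heq ⟨(j:ℕ), hj⟩
        simpa [Fin.castLE] using this
      have hklt : k - 1 < k := by omega
      have hlast : w ⟨k-1, hklt⟩ = w' ⟨k-1, hklt⟩ := by
        have h1 := coefkey p hQp
        have h2 := coefkey p' hQp'
        have hdiff : ∑ j : Fin k, ((-1:ℤ))^((j:ℕ)+1+k) * (k.choose ((j:ℕ)+1)) * (w j - w' j)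
            = 0 := by
          have hterm : ∀ j : Fin k, ((-1:ℤ))^((j:ℕ)+1+k) * (k.choose ((j:ℕ)+1)) * (w j - w' j)
              = ((-1:ℤ))^((j:ℕ)+1+k) * (k.choose ((j:ℕ)+1)) * w j
                - ((-1:ℤ))^((j:ℕ)+1+k) * (k.choose ((j:ℕ)+1)) * w' j := fun j => by ring
          rw [Finset.sum_congr rfl (fun j _ => hterm j), Finset.sum_sub_distrib, h1, h2, sub_zero]
        have hne : ∀ j : Fin k, j ≠ ⟨k-1, hklt⟩ →
            ((-1:ℤ))^((j:ℕ)+1+k) * (k.choose ((j:ℕ)+1)) * (w j - w' j) = 0 := by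
          intro j hj
          have hjv : (j:ℕ) ≠ k - 1 := fun hc => hj (Fin.ext hc)
          have hjlt : (j:ℕ) < k - 1 := by have := j.isLt; omega
          rw [hrest j hjlt, sub_self, mul_zero]
        have hsingle : ∑ j : Fin k, ((-1:ℤ))^((j:ℕ)+1+k) * (k.choose ((j:ℕ)+1)) * (w j - w' j)
            = ((-1:ℤ))^((k-1)+1+k) * (k.choose ((k-1)+1)) *
              (w ⟨k-1, hklt⟩ - w' ⟨k-1, hklt⟩) :=
          Finset.sum_eq_single_of_mem _ (Finset.mem_univ _) (fun j _ hj => hne j hj)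
        have hcoef : ((-1:ℤ))^((k-1)+1+k) * ((k.choose ((k-1)+1) : ℕ) : ℤ) = 1 := by
          have hk1 : k - 1 + 1 = k := by omega
          rw [hk1, Nat.choose_self]
          have hev : Even (k + k) := ⟨k, rfl⟩
          rw [hev.neg_one_pow]
          norm_num
        rw [hsingle, hcoef, one_mul] at hdiff
        exact sub_eq_zero.mp hdiff
      funext j
      rcases Nat.lt_or_ge (j:ℕ) (k-1) with hj | hj
      · exact hrest j hj
      · have hje : j = ⟨k-1, hklt⟩ := Fin.ext (show (j:ℕ) = k - 1 by have := j.isLt; omega)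
        rw [hje]
        exact hlast
  calc (P.filter Q).card ≤ img.card * ((P.filter fun p => v p.1 - v p.2 = 0).card) := step1
    _ ≤ _ := Nat.mul_le_mul step2 (le_of_eq (congrArg Finset.card
        (Finset.filter_congr fun p _ => (hdiag p).symm)))

lemma signed_le_abs (s k : ℕ) (N : ℤ) :
    (((Fintype.piFinset fun _ : Fin s => Finset.Icc (-N) N) ×ˢ
      (Fintype.piFinset fun _ : Fin s => Finset.Icc (-N) N)).filter
        (fun p => ∑ i, |p.1 i|^k = ∑ i, |p.2 i|^k)).card ≤
      2^(2*s) * (((Fintype.piFinset fun _ : Fin s => Finset.Icc (0:ℤ) N) ×ˢ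
        (Fintype.piFinset fun _ : Fin s => Finset.Icc (0:ℤ) N)).filter
          (fun p => ∑ i, (p.1 i)^k = ∑ i, (p.2 i)^k)).card := by
  classical
  have hinj := Finset.card_le_card_of_injOn
    (f := fun x : (Fin s → ℤ) × (Fin s → ℤ) =>
      (((fun i => decide (x.1 i < 0), fun i => decide (x.2 i < 0)) :
          (Fin s → Bool) × (Fin s → Bool)),
        (((fun i => |x.1 i|), fun i => |x.2 i|) : (Fin s → ℤ) × (Fin s → ℤ))))
    (s := ((Fintype.piFinset fun _ : Fin s => Finset.Icc (-N) N) ×ˢ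
      (Fintype.piFinset fun _ : Fin s => Finset.Icc (-N) N)).filter
        (fun p => ∑ i, |p.1 i|^k = ∑ i, |p.2 i|^k))
    (t := (Finset.univ : Finset ((Fin s → Bool) × (Fin s → Bool))) ×ˢ
      (((Fintype.piFinset fun _ : Fin s => Finset.Icc (0:ℤ) N) ×ˢ
        (Fintype.piFinset fun _ : Fin s => Finset.Icc (0:ℤ) N)).filter
          (fun p => ∑ i, (p.1 i)^k = ∑ i, (p.2 i)^k)))
    ?_ ?_
  · calc _ ≤ _ := hinj
      _ = 2^(2*s) * _ := by
        rw [Finset.card_product, Finset.card_univ]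
        congr 1
        simp [Fintype.card_fun, two_mul, pow_add]
  · intro x hx
    rw [Finset.mem_coe, Finset.mem_filter] at hx
    obtain ⟨hxP, hxQ⟩ := hx
    rw [Finset.mem_product] at hxP
    rw [Finset.mem_coe, Finset.mem_product]
    refine ⟨Finset.mem_univ _, ?_⟩
    rw [Finset.mem_filter, Finset.mem_product]
    refine ⟨⟨?_, ?_⟩, ?_⟩
    · rw [Fintype.mem_piFinset]
      intro i
      have := Fintype.mem_piFinset.mp hxP.1 i
      rw [Finset.mem_Icc] at this ⊢
      constructor
      · exact abs_nonneg _
      · exact abs_le.mpr ⟨this.1, this.2⟩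
    · rw [Fintype.mem_piFinset]
      intro i
      have := Fintype.mem_piFinset.mp hxP.2 i
      rw [Finset.mem_Icc] at this ⊢
      exact ⟨abs_nonneg _, abs_le.mpr ⟨this.1, this.2⟩⟩
    · exact hxQ
  · intro x hx y hy heq
    simp only [Prod.ext_iff] at heq
    obtain ⟨⟨hs1, hs2⟩, ha1, ha2⟩ := heq
    have comp : ∀ (a b : ℤ), (decide (a < 0) = decide (b < 0)) → |a| = |b| → a = b := by
      intro a b hd habs
      rw [decide_eq_decide] at hd
      rcases abs_eq_abs.mp habs with h | h <;> omega
    ext i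
    · exact comp _ _ (congrFun hs1 i) (congrFun ha1 i)
    · exact comp _ _ (congrFun hs2 i) (congrFun ha2 i)

lemma abs_count_eq_shift (s k : ℕ) (N : ℤ) :
    (((Fintype.piFinset fun _ : Fin s => Finset.Icc (0:ℤ) N) ×ˢ
      (Fintype.piFinset fun _ : Fin s => Finset.Icc (0:ℤ) N)).filter
        (fun p => ∑ i, (p.1 i)^k = ∑ i, (p.2 i)^k)).card =
    (((Fintype.piFinset fun _ : Fin s => Finset.Icc (1:ℤ) (N+1)) ×ˢ
      (Fintype.piFinset fun _ : Fin s => Finset.Icc (1:ℤ) (N+1))).filter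
        (fun p => ∑ i, (p.1 i - 1)^k = ∑ i, (p.2 i - 1)^k)).card := by
  classical
  refine Finset.card_nbij'
    (fun p => ((fun i => p.1 i + 1), (fun i => p.2 i + 1)))
    (fun p => ((fun i => p.1 i - 1), (fun i => p.2 i - 1))) ?_ ?_ ?_ ?_
  · intro p hp
    rw [Finset.mem_coe, Finset.mem_filter, Finset.mem_product] at hp ⊢
    obtain ⟨⟨h1, h2⟩, hq⟩ := hp
    refine ⟨⟨?_, ?_⟩, ?_⟩
    · rw [Fintype.mem_piFinset] at h1 ⊢
      intro i; have := Finset.mem_Icc.mp (h1 i); simp only [Finset.mem_Icc]; omega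
    · rw [Fintype.mem_piFinset] at h2 ⊢
      intro i; have := Finset.mem_Icc.mp (h2 i); simp only [Finset.mem_Icc]; omega
    · simpa using hq
  · intro p hp
    rw [Finset.mem_coe, Finset.mem_filter, Finset.mem_product] at hp ⊢
    obtain ⟨⟨h1, h2⟩, hq⟩ := hp
    refine ⟨⟨?_, ?_⟩, ?_⟩
    · rw [Fintype.mem_piFinset] at h1 ⊢
      intro i; have := Finset.mem_Icc.mp (h1 i); simp only [Finset.mem_Icc]; omega
    · rw [Fintype.mem_piFinset] at h2 ⊢
      intro i; have := Finset.mem_Icc.mp (h2 i); simp only [Finset.mem_Icc]; omega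
    · exact hq
  · intro p _; ext i <;> simp
  · intro p _; ext i <;> simp

lemma eChar_add (x y : ℝ) : eChar (x + y) = eChar x * eChar y := by
  unfold eChar; rw [← Complex.exp_add]; push_cast; ring_nf

lemma eChar_sum {γ : Type*} (s : Finset γ) (f : γ → ℝ) :
    eChar (∑ i ∈ s, f i) = ∏ i ∈ s, eChar (f i) := by
  classical
  induction s using Finset.cons_induction with
  | empty => simp [eChar]
  | cons a s ha ih => rw [Finset.sum_cons, Finset.prod_cons, eChar_add, ih]

lemma conj_eChar (x : ℝ) : (starRingEnd ℂ) (eChar x) = eChar (-x) := by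
  unfold eChar
  rw [← Complex.exp_conj]
  congr 1
  simp only [map_mul, Complex.conj_I, Complex.conj_ofReal, map_ofNat]
  push_cast
  ring

lemma continuous_eChar_mul (c : ℝ) : Continuous fun t : ℝ => eChar (c * t) := by
  unfold eChar; fun_prop

lemma integral_eChar (m : ℤ) :
    ∫ t in (0:ℝ)..1, eChar ((m : ℝ) * t) = if m = 0 then 1 else 0 := by
  have h : ∀ t : ℝ, eChar ((m : ℝ) * t) = Complex.exp ((2 * (Real.pi:ℂ) * Complex.I * m) * t) := by
    intro t; unfold eChar; push_cast; ring_nf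
  rcases eq_or_ne m 0 with hm | hm
  · simp [hm, eChar]
  · rw [if_neg hm]
    have hc : (2 * (Real.pi:ℂ) * Complex.I * m) ≠ 0 := by
      simp [Real.pi_ne_zero, Complex.I_ne_zero, hm]
    have h1 : Complex.exp (2 * (Real.pi:ℂ) * Complex.I * m) = 1 := by
      have := Complex.exp_int_mul_two_pi_mul_I m
      rw [← this]; ring_nf
    simp only [h]
    rw [integral_exp_mul_complex hc]
    push_cast
    rw [mul_one, mul_zero, Complex.exp_zero, h1]
    simp

lemma orthogonality (s : ℕ) (I : Finset ℤ) (w : ℤ → ℤ) :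
    ∫ t in (0:ℝ)..1, ‖∑ n ∈ I, eChar ((w n : ℝ) * t)‖ ^ (2*s) =
      ((((Fintype.piFinset fun _ : Fin s => I) ×ˢ (Fintype.piFinset fun _ : Fin s => I)).filter
        (fun p => ∑ i, w (p.1 i) = ∑ i, w (p.2 i))).card : ℝ) := by
  classical
  set T := Fintype.piFinset fun _ : Fin s => I with hT
  set A : (Fin s → ℤ) → ℤ := fun c => ∑ i, w (c i) with hA
  set z : ℝ → ℂ := fun t => ∑ n ∈ I, eChar ((w n : ℝ) * t) with hz
  set F : ℝ → ℂ := fun t => ∑ p ∈ T ×ˢ T, eChar (((A p.1 - A p.2 : ℤ) : ℝ) * t) with hF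
  have hpow : ∀ t : ℝ, z t ^ s = ∑ c ∈ T, eChar ((A c : ℝ) * t) := by
    intro t
    rw [hz]
    simp only
    rw [← Fin.prod_const s (∑ n ∈ I, eChar ((w n : ℝ) * t)), Finset.prod_univ_sum]
    refine Finset.sum_congr rfl fun c _ => ?_
    rw [← eChar_sum]
    congr 1
    push_cast [hA]
    rw [Finset.sum_mul]
  have hptF : ∀ t : ℝ, F t = z t ^ s * (starRingEnd ℂ) (z t ^ s) := by
    intro t
    rw [hpow, map_sum]
    rw [Finset.sum_mul_sum]
    rw [hF]
    simp only
    rw [Finset.sum_product]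
    refine Finset.sum_congr rfl fun c _ => Finset.sum_congr rfl fun d _ => ?_
    rw [conj_eChar, ← eChar_add]
    congr 1
    push_cast
    ring
  have hre : ∀ t : ℝ, (F t).re = ‖z t‖ ^ (2*s) := by
    intro t
    rw [hptF, Complex.mul_conj]
    rw [Complex.ofReal_re]  -- (↑(normSq u)).re
    rw [Complex.normSq_eq_norm_sq, norm_pow, ← pow_mul]
    ring_nf
  have hcont : Continuous F := by
    refine continuous_finset_sum _ fun p _ => continuous_eChar_mul _
  have hintF : ∫ t in (0:ℝ)..1, F t =
      (((T ×ˢ T).filter (fun p => ∑ i, w (p.1 i) = ∑ i, w (p.2 i))).card : ℂ) := by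
    rw [hF]
    simp only
    rw [intervalIntegral.integral_finset_sum
      (fun p _ => (continuous_eChar_mul _).intervalIntegrable 0 1)]
    simp only [integral_eChar]
    simp only [sub_eq_zero, hA]
    rw [Finset.sum_boole]
  have : (fun t => ‖z t‖ ^ (2*s)) = fun t => (F t).re := by
    funext t; rw [hre]
  calc ∫ t in (0:ℝ)..1, ‖z t‖ ^ (2*s)
      = ∫ t in (0:ℝ)..1, (F t).re := by rw [this]
    _ = (∫ t in (0:ℝ)..1, F t).re := by
        rw [intervalIntegral.integral_of_le zero_le_one,
            intervalIntegral.integral_of_le zero_le_one,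
            ]
        simp only [← RCLike.re_to_complex]
        exact integral_re hcont.integrableOn_Ioc
    _ = _ := by rw [hintF]; simp

theorem moment_bounded_by_vinogradov (s k : ℕ) (hs : 1 ≤ s) (hk : 2 ≤ k) :
    ∃ C : ℝ, 0 < C ∧ ∀ r : ℝ, 1 ≤ r →
      ∫ t in (0 : ℝ)..1, ‖alphaSum k r t 0‖ ^ (2 * s) ≤
        C * r ^ (((k * (k - 1) : ℕ) : ℝ) / 2) * (Jmean s k (⌊r⌋₊ + 1) : ℝ) := by
  classical
  set m : ℕ := k * (k - 1) / 2 with hm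
  have hs' : (1:ℝ) ≤ (s:ℝ) := by exact_mod_cast hs
  refine ⟨2^(2*s) * (3*(s:ℝ))^(k-1) * 2^m, ?_, ?_⟩
  · have h3s : (0:ℝ) < 3*(s:ℝ) := by linarith
    positivity
  intro r hr
  have hr0 : (0:ℝ) ≤ r := by linarith
  set N : ℤ := ⌊r⌋ with hN
  have hN1 : 1 ≤ N := Int.le_floor.mpr (by exact_mod_cast hr)
  have hNr : (N:ℝ) ≤ r := Int.floor_le r
  have hfloor : ((⌊r⌋₊ : ℤ)) = N := Int.natCast_floor_eq_floor hr0
  -- step 0 : the integral equals the signed count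
  have hint : ∫ t in (0:ℝ)..1, ‖alphaSum k r t 0‖ ^ (2*s)
      = ((((Fintype.piFinset fun _ : Fin s => Finset.Icc (-N) N) ×ˢ
          (Fintype.piFinset fun _ : Fin s => Finset.Icc (-N) N)).filter
            (fun p => ∑ i, |p.1 i|^k = ∑ i, |p.2 i|^k)).card : ℝ) := by
    have horth := orthogonality s (Finset.Icc (-N) N) (fun n => |n|^k)
    have halpha : ∀ t : ℝ, alphaSum k r t 0
        = ∑ n ∈ Finset.Icc (-N) N, eChar ((((fun n : ℤ => |n|^k) n : ℤ) : ℝ) * t) := by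
      intro t
      unfold alphaSum
      rw [← hN]
      refine Finset.sum_congr rfl fun n _ => ?_
      congr 1
      push_cast
      ring
    calc ∫ t in (0:ℝ)..1, ‖alphaSum k r t 0‖ ^ (2*s)
        = ∫ t in (0:ℝ)..1, ‖∑ n ∈ Finset.Icc (-N) N, eChar ((((fun n : ℤ => |n|^k) n : ℤ) : ℝ) * t)‖ ^ (2*s) := by
          congr 1
          funext t
          rw [halpha t]
      _ = _ := by rw [horth]
  -- nat-level chain
  have c1 := signed_le_abs s k N
  have c2 := abs_count_eq_shift s k N
  have c3 := single_le_fibers s k hk (N+1)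
  -- identify the diagonal count with Jmean
  have hJD : (((Fintype.piFinset fun _ : Fin s => Finset.Icc (1:ℤ) (N+1)) ×ˢ
         (Fintype.piFinset fun _ : Fin s => Finset.Icc (1:ℤ) (N+1))).filter
          (fun p => (fun j : Fin k => (∑ i, p.1 i ^ ((j:ℕ)+1)) - ∑ i, p.2 i ^ ((j:ℕ)+1)) =
            (0 : Fin k → ℤ))).card = Jmean s k (⌊r⌋₊ + 1) := by
    unfold Jmean
    have hcast : ((⌊r⌋₊ + 1 : ℕ) : ℤ) = N + 1 := by
      push_cast [hfloor]
      ring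
    rw [hcast]
    congr 1
    apply Finset.filter_congr
    intro p _
    constructor
    · intro hfun l hl
      rw [Finset.mem_Icc] at hl
      have hj : l - 1 < k := by omega
      have hfj := congrFun hfun ⟨l-1, hj⟩
      simp only [Pi.zero_apply] at hfj
      have hl1 : l - 1 + 1 = l := by omega
      rw [hl1] at hfj
      exact sub_eq_zero.mp hfj
    · intro hall
      funext j
      have hmem : ((j:ℕ)+1) ∈ Finset.Icc 1 k :=
        Finset.mem_Icc.mpr ⟨by omega, by have := j.isLt; omega⟩
      have := hall ((j:ℕ)+1) hmem
      show (∑ i, p.1 i ^ ((j:ℕ)+1)) - ∑ i, p.2 i ^ ((j:ℕ)+1) = 0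
      rw [sub_eq_zero]
      exact this
  -- bound on the fiber box
  have hWn : ((Fintype.piFinset fun j : Fin (k-1) =>
      Finset.Icc (-((s : ℤ) * (N+1)^((j:ℕ)+1))) ((s : ℤ) * (N+1)^((j:ℕ)+1))).card : ℝ)
      ≤ (3*(s:ℝ))^(k-1) * (2*r)^m := by
    rw [Fintype.card_piFinset]
    push_cast
    have hfac : ∀ j : Fin (k-1),
        ((Finset.Icc (-((s : ℤ) * (N+1)^((j:ℕ)+1))) ((s : ℤ) * (N+1)^((j:ℕ)+1))).card : ℝ)
        ≤ (3*(s:ℝ)) * (2*r)^((j:ℕ)+1) := by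
      intro j
      set B : ℤ := (s : ℤ) * (N+1)^((j:ℕ)+1) with hB
      have hB1 : 1 ≤ B := by
        rw [hB]
        have h1 : (1:ℤ) ≤ (s:ℤ) := by exact_mod_cast hs
        have h2 : (1:ℤ) ≤ (N+1)^((j:ℕ)+1) := by
          calc (1:ℤ) = 1^((j:ℕ)+1) := (one_pow _).symm
            _ ≤ (N+1)^((j:ℕ)+1) := pow_le_pow_left₀ (by norm_num) (by omega) _
        nlinarith
      have hcard : ((Finset.Icc (-B) B).card : ℝ) = 2*(B:ℝ) + 1 := by
        rw [Int.card_Icc]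
        have hnn : (0:ℤ) ≤ B + 1 - (-B) := by omega
        have := Int.toNat_of_nonneg hnn
        have hcast : (((B + 1 - (-B)).toNat : ℕ) : ℝ) = ((B + 1 - (-B) : ℤ) : ℝ) := by
          exact_mod_cast congrArg (fun z : ℤ => (z : ℝ)) this
        rw [hcast]
        push_cast
        ring
      rw [hcard]
      have hBr : (B:ℝ) = (s:ℝ) * ((N:ℝ)+1)^((j:ℕ)+1) := by rw [hB]; push_cast; ring
      have hN2r : (N:ℝ) + 1 ≤ 2*r := by linarith
      have hNpos : (0:ℝ) ≤ (N:ℝ) + 1 := by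
        have : (1:ℝ) ≤ (N:ℝ) := by exact_mod_cast hN1
        linarith
      have hpow : ((N:ℝ)+1)^((j:ℕ)+1) ≤ (2*r)^((j:ℕ)+1) :=
        pow_le_pow_left₀ hNpos hN2r _
      have hBreal : (1:ℝ) ≤ (B:ℝ) := by exact_mod_cast hB1
      calc 2*(B:ℝ) + 1 ≤ 3*(B:ℝ) := by linarith
        _ = 3*(s:ℝ) * ((N:ℝ)+1)^((j:ℕ)+1) := by rw [hBr]; ring
        _ ≤ 3*(s:ℝ) * (2*r)^((j:ℕ)+1) := by
            have h3s : (0:ℝ) ≤ 3*(s:ℝ) := by linarith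
            exact mul_le_mul_of_nonneg_left hpow h3s
    calc ∏ j : Fin (k-1),
        ((Finset.Icc (-((s : ℤ) * (N+1)^((j:ℕ)+1))) ((s : ℤ) * (N+1)^((j:ℕ)+1))).card : ℝ)
        ≤ ∏ j : Fin (k-1), (3*(s:ℝ)) * (2*r)^((j:ℕ)+1) :=
          Finset.prod_le_prod (fun j _ => by positivity) (fun j _ => hfac j)
      _ = (3*(s:ℝ))^(k-1) * (2*r)^(∑ j : Fin (k-1), ((j:ℕ)+1)) := by
          rw [Finset.prod_mul_distrib, Finset.prod_const, Finset.card_univ, Fintype.card_fin,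
            Finset.prod_pow_eq_pow_sum]
      _ = (3*(s:ℝ))^(k-1) * (2*r)^m := by
          congr 1
          have hsum : ∑ j : Fin (k-1), ((j:ℕ)+1) = m := by
            rw [Fin.sum_univ_eq_sum_range (fun i => i+1) (k-1)]
            have hk1 : k - 1 + 1 = k := by omega
            have h2 : ∑ i ∈ Finset.range ((k-1)+1), i
                = (∑ i ∈ Finset.range (k-1), (i+1)) + 0 := Finset.sum_range_succ' _ _
            rw [add_zero] at h2
            rw [← h2, hk1, Finset.sum_range_id, hm]
          rw [hsum]
  -- put it together
  have hmain : ((((Fintype.piFinset fun _ : Fin s => Finset.Icc (-N) N) ×ˢ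
          (Fintype.piFinset fun _ : Fin s => Finset.Icc (-N) N)).filter
            (fun p => ∑ i, |p.1 i|^k = ∑ i, |p.2 i|^k)).card : ℕ)
      ≤ 2^(2*s) * ((Fintype.piFinset fun j : Fin (k-1) =>
          Finset.Icc (-((s : ℤ) * (N+1)^((j:ℕ)+1))) ((s : ℤ) * (N+1)^((j:ℕ)+1))).card
          * Jmean s k (⌊r⌋₊ + 1)) := by
    refine le_trans c1 ?_
    rw [c2]
    refine Nat.mul_le_mul_left _ ?_
    rw [← hJD]
    exact c3
  rw [hint]
  have hmainR : ((((Fintype.piFinset fun _ : Fin s => Finset.Icc (-N) N) ×ˢ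
          (Fintype.piFinset fun _ : Fin s => Finset.Icc (-N) N)).filter
            (fun p => ∑ i, |p.1 i|^k = ∑ i, |p.2 i|^k)).card : ℝ)
      ≤ (2:ℝ)^(2*s) * (((Fintype.piFinset fun j : Fin (k-1) =>
          Finset.Icc (-((s : ℤ) * (N+1)^((j:ℕ)+1))) ((s : ℤ) * (N+1)^((j:ℕ)+1))).card : ℝ)
          * (Jmean s k (⌊r⌋₊ + 1) : ℝ)) := by exact_mod_cast hmain
  have hexp : r ^ (((k * (k - 1) : ℕ) : ℝ) / 2) = r ^ m := by
    have hdvd : 2 ∣ k * (k-1) := by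
      have hev : Even ((k-1) * (k-1+1)) := Nat.even_mul_succ_self (k-1)
      have hk1 : k - 1 + 1 = k := by omega
      rw [hk1, mul_comm] at hev
      exact hev.two_dvd
    have : (((k * (k - 1) : ℕ)) : ℝ) / 2 = ((m : ℕ) : ℝ) := by
      rw [hm, Nat.cast_div hdvd (by norm_num)]
      norm_num
    rw [this, Real.rpow_natCast]
  rw [hexp]
  calc _ ≤ _ := hmainR
    _ ≤ (2:ℝ)^(2*s) * (((3*(s:ℝ))^(k-1) * (2*r)^m) * (Jmean s k (⌊r⌋₊ + 1) : ℝ)) := by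
        have hJnn : (0:ℝ) ≤ (Jmean s k (⌊r⌋₊ + 1) : ℝ) := Nat.cast_nonneg _
        have h2p : (0:ℝ) ≤ (2:ℝ)^(2*s) := by positivity
        refine mul_le_mul_of_nonneg_left ?_ h2p
        exact mul_le_mul_of_nonneg_right hWn hJnn
    _ = 2^(2*s) * (3*(s:ℝ))^(k-1) * 2^m * r ^ m * (Jmean s k (⌊r⌋₊ + 1) : ℝ) := by
        rw [mul_pow]
        ring

end
end
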